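/- Let L(λ) = P + Σ_{i=1}^N Y_i/(λ - λ_i) be the rational Gaudin Lax matrix, where P, Y₁,…,Y_N are the su(2) matrices associated to vectors p, y₁,…,y_N ∈ ℝ³ and λ₁,…,λ_N are pairwise distinct. Then for λ ∉ {λ₁,…,λ_N}, -tr(L(λ)²) = (1/2)⟨p,p⟩ + Σ_i [ H_i/(λ - λ_i) + C_i/(λ - λ_i)² ], where H_i = ⟨p, y_i⟩ + Σ_{j≠i} ⟨y_i, y_j⟩/(λ_i - λ_j) and C_i = (1/2)⟨y_i, y_i⟩. -/

import Mathlib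

open Matrix

/-- The standard identification of `ℝ³` with `su(2)`. -/
noncomputable def su2 (a : Fin 3 → ℝ) : Matrix (Fin 2) (Fin 2) ℂ :=
  (1 / 2 : ℂ) • !![-Complex.I * a 2, -Complex.I * a 0 - a 1;
                   -Complex.I * a 0 + a 1, Complex.I * a 2]

/-- The rational Gaudin Lax matrix `L(λ) = P + Σ_i Y_i/(λ - λ_i)`. -/
noncomputable def gaudinLax {N : ℕ} (p : Fin 3 → ℝ) (lam : Fin N → ℝ)
    (y : Fin N → Fin 3 → ℝ) (l : ℝ) : Matrix (Fin 2) (Fin 2) ℂ :=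
  su2 p + ∑ i : Fin N, ((l : ℂ) - (lam i : ℂ))⁻¹ • su2 (y i)

/-- The rational Gaudin Hamiltonian `H_i`. -/
noncomputable def gaudinH {N : ℕ} (p : Fin 3 → ℝ) (lam : Fin N → ℝ) (i : Fin N)
    (y : Fin N → Fin 3 → ℝ) : ℝ :=
  p ⬝ᵥ y i + ∑ j ∈ Finset.univ.filter (· ≠ i), (y i ⬝ᵥ y j) / (lam i - lam j)

lemma trace_su2 (a b : Fin 3 → ℝ) :
    (su2 a * su2 b).trace = -(1/2 : ℂ) * ((a ⬝ᵥ b : ℝ) : ℂ) := by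
  simp [su2, Matrix.mul_fin_two, Matrix.trace_fin_two, dotProduct, Fin.sum_univ_succ,
    Matrix.smul_mul, Matrix.mul_smul]
  ring_nf
  simp [Complex.I_sq]
  ring

lemma swap_erase {N : ℕ} (F : Fin N → Fin N → ℂ) :
    ∑ i : Fin N, ∑ j ∈ Finset.univ.erase i, F i j
      = ∑ j : Fin N, ∑ i ∈ Finset.univ.erase j, F i j := by
  simp_rw [← Finset.filter_ne', Finset.sum_filter]
  rw [Finset.sum_comm]
  refine Finset.sum_congr rfl fun y _ => Finset.sum_congr rfl fun x _ => ?_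
  by_cases h : y = x
  · simp [h]
  · simp [h, Ne.symm h]

lemma offdiag_key {N : ℕ} (c μ : Fin N → ℂ) (g : Fin N → Fin N → ℂ)
    (hg : ∀ i j, g i j = g j i)
    (hc : ∀ i j, i ≠ j → c i * c j = (c i - c j) / (μ i - μ j)) :
    ∑ i : Fin N, ∑ j : Fin N, c i * c j * g i j
      = ∑ i : Fin N, (c i ^ 2 * g i i
          + 2 * (c i * ∑ j ∈ Finset.univ.erase i, g i j / (μ i - μ j))) := by
  have hsplit : ∀ (f : Fin N → Fin N → ℂ),
      ∑ i : Fin N, ∑ j : Fin N, f i j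
        = ∑ i : Fin N, (f i i + ∑ j ∈ Finset.univ.erase i, f i j) := by
    intro f
    refine Finset.sum_congr rfl fun i _ => ?_
    exact (Finset.add_sum_erase _ _ (Finset.mem_univ i)).symm
  rw [hsplit]
  have h1 : ∑ i : Fin N, ∑ j ∈ Finset.univ.erase i, c i * c j * g i j
      = ∑ i : Fin N, ∑ j ∈ Finset.univ.erase i,
          (c i * (g i j / (μ i - μ j)) - c j * (g i j / (μ i - μ j))) := by
    refine Finset.sum_congr rfl fun i _ => Finset.sum_congr rfl fun j hj => ?_
    have hij : i ≠ j := fun h => (Finset.mem_erase.mp hj).1 h.symm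
    rw [hc i j hij]
    ring
  have h2 : ∑ i : Fin N, ∑ j ∈ Finset.univ.erase i, c j * (g i j / (μ i - μ j))
      = -∑ i : Fin N, ∑ j ∈ Finset.univ.erase i, c i * (g i j / (μ i - μ j)) := by
    rw [swap_erase (fun i j => c j * (g i j / (μ i - μ j))), ← Finset.sum_neg_distrib]
    refine Finset.sum_congr rfl fun i _ => ?_
    rw [← Finset.sum_neg_distrib]
    refine Finset.sum_congr rfl fun j _ => ?_
    rw [hg j i]
    have : μ j - μ i = -(μ i - μ j) := by ring
    rw [this, div_neg]
    ring
  simp_rw [Finset.sum_sub_distrib] at h1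
  rw [Finset.sum_add_distrib, Finset.sum_add_distrib, h1, h2]
  have : ∑ i : Fin N, c i * c i * g i i = ∑ i : Fin N, c i ^ 2 * g i i :=
    Finset.sum_congr rfl fun i _ => by ring
  rw [this]
  congr 1
  rw [sub_neg_eq_add, ← Finset.sum_add_distrib]
  refine Finset.sum_congr rfl fun i _ => ?_
  rw [Finset.mul_sum, Finset.mul_sum, ← Finset.sum_add_distrib]
  exact Finset.sum_congr rfl fun j _ => by ring

/-- Expansion of the spectral invariant
Lax matrix in terms of the Hamiltonians `H_i` and Casimirs `C_i`. -/
theorem gaudin_spectral_invariants {N : ℕ} (p : Fin 3 → ℝ) (lam : Fin N → ℝ)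
    (hlam : Function.Injective lam) (y : Fin N → Fin 3 → ℝ) (l : ℝ)
    (hl : ∀ i, l ≠ lam i) :
    -((gaudinLax p lam y l * gaudinLax p lam y l).trace) =
      (((1 / 2 : ℝ) * (p ⬝ᵥ p) +
        ∑ i : Fin N, (gaudinH p lam i y / (l - lam i) +
          (1 / 2 : ℝ) * (y i ⬝ᵥ y i) / (l - lam i) ^ 2) : ℝ) : ℂ) := by
  have hd : ∀ i, ((l : ℂ) - lam i) ≠ 0 := fun i =>
    sub_ne_zero.mpr (by exact_mod_cast hl i)
  have hmu : ∀ i j : Fin N, i ≠ j → ((lam i : ℂ) - lam j) ≠ 0 := fun i j hij =>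
    sub_ne_zero.mpr (by exact_mod_cast fun h => hij (hlam h))
  simp only [gaudinLax, add_mul, mul_add, Finset.sum_mul, Finset.mul_sum,
    Matrix.smul_mul, Matrix.mul_smul, trace_add, trace_sum, trace_smul,
    trace_su2, smul_smul, smul_eq_mul]
  rw [Finset.sum_add_distrib]
  set c : Fin N → ℂ := fun i => ((l : ℂ) - lam i)⁻¹ with hc_def
  set g : Fin N → Fin N → ℂ := fun i j => ((y i ⬝ᵥ y j : ℝ) : ℂ) with hg_def
  have key := offdiag_key c (fun i => (lam i : ℂ)) g
    (fun i j => by simp only [hg_def]; rw [dotProduct_comm])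
    (fun i j hij => by
      have h1 := hd i; have h2 := hd j; have h3 := hmu i j hij
      simp only [hc_def]
      field_simp
      ring)
  have hdouble : ∑ x : Fin N, ∑ x1 : Fin N,
      c x * c x1 * (-(1/2 : ℂ) * ((y x1 ⬝ᵥ y x : ℝ) : ℂ))
      = -(1/2 : ℂ) * ∑ i : Fin N, (c i ^ 2 * g i i
          + 2 * (c i * ∑ j ∈ Finset.univ.erase i, g i j / ((lam i : ℂ) - lam j))) := by
    rw [← key, Finset.mul_sum]
    refine Finset.sum_congr rfl fun i _ => ?_
    rw [Finset.mul_sum]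
    refine Finset.sum_congr rfl fun j _ => ?_
    simp only [hg_def]
    rw [dotProduct_comm]
    ring
  rw [hdouble]
  have e1 : ∑ x : Fin N, c x * (-(1/2 : ℂ) * ((y x ⬝ᵥ p : ℝ) : ℂ))
      = -∑ x : Fin N, (1/2 : ℂ) * c x * ((p ⬝ᵥ y x : ℝ) : ℂ) := by
    rw [← Finset.sum_neg_distrib]
    refine Finset.sum_congr rfl fun x _ => ?_
    rw [dotProduct_comm]
    ring
  have e2 : ∑ x : Fin N, c x * (-(1/2 : ℂ) * ((p ⬝ᵥ y x : ℝ) : ℂ))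
      = -∑ x : Fin N, (1/2 : ℂ) * c x * ((p ⬝ᵥ y x : ℝ) : ℂ) := by
    rw [← Finset.sum_neg_distrib]
    exact Finset.sum_congr rfl fun x _ => by ring
  rw [e1, e2]
  simp only [gaudinH, Finset.filter_ne']
  push_cast
  have final : ∑ x : Fin N, (1/2 : ℂ) * c x * ((p ⬝ᵥ y x : ℝ) : ℂ)
      + ∑ x : Fin N, (1/2 : ℂ) * c x * ((p ⬝ᵥ y x : ℝ) : ℂ)
      + (1/2 : ℂ) * ∑ i : Fin N, (c i ^ 2 * g i i
          + 2 * (c i * ∑ j ∈ Finset.univ.erase i, g i j / ((lam i : ℂ) - lam j)))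
      = ∑ i : Fin N, ((((p ⬝ᵥ y i : ℝ) : ℂ)
            + ∑ j ∈ Finset.univ.erase i, ((y i ⬝ᵥ y j : ℝ) : ℂ) / ((lam i : ℂ) - lam j))
              / ((l : ℂ) - lam i)
          + (1/2 : ℂ) * ((y i ⬝ᵥ y i : ℝ) : ℂ) / ((l : ℂ) - lam i) ^ 2) := by
    rw [Finset.mul_sum, ← Finset.sum_add_distrib, ← Finset.sum_add_distrib]
    refine Finset.sum_congr rfl fun i _ => ?_
    simp only [hc_def, hg_def]
    simp_rw [div_eq_mul_inv]
    rw [← inv_pow]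
    ring
  rw [← final]
  ring
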